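/- Let K be a field of characteristic zero, n ≥ 1, m ≥ 1. Let a(t) = a_m t^m + ⋯ + a_1 t and b(t) = b_m t^m + ⋯ + b_1 t be polynomials in M_n(K)[t] with zero constant term, and suppose the leading coefficient a_m is invertible. Assume that the commutator [a(t), b(t)] = a(t)b(t) − b(t)a(t) has degree at most m in t, i.e. its coefficients in degrees m+1, …, 2m all vanish, and write c_m for its coefficient of t^m. Then Tr(a_m^{-1} c_m) = 0. -/

import Mathlib

open Polynomial

section aux
variable {n : ℕ} {K : Type*} [Field K]

lemma tr_coeff_mul_comm (x y : Polynomial (Matrix (Fin n) (Fin n) K)) (N : ℕ) :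
    Matrix.trace ((x * y).coeff N) = Matrix.trace ((y * x).coeff N) := by
  rw [coeff_mul, coeff_mul, Matrix.trace_sum, Matrix.trace_sum]
  conv_rhs => rw [← Finset.HasAntidiagonal.map_swap_antidiagonal (n := N)]
  rw [Finset.sum_map]
  simp only [Function.Embedding.coeFn_mk, Prod.fst_swap, Prod.snd_swap]
  exact Finset.sum_congr rfl fun p _ => Matrix.trace_mul_comm _ _

end aux

/-- **Restatement of the vanishing of Φ (remark 3.4).**
Let `a(t) = a_m t^m + ⋯ + a_1 t` and `b(t) = b_m t^m + ⋯ + b_1 t` be polynomials with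
coefficients in `M_n(K)`, zero constant term, `a_m` invertible. If the commutator
`[a(t), b(t)]` has degree at most `m` (its coefficients in degrees `m+1, …, 2m` vanish),
and `c_m` is its coefficient of `t^m`, then `Tr(a_m⁻¹ c_m) = 0`. -/
theorem statement8 {K : Type*} [Field K] [CharZero K] (n m : ℕ) (hn : 1 ≤ n) (hm : 1 ≤ m)
    (a b : Polynomial (Matrix (Fin n) (Fin n) K))
    (ha0 : a.coeff 0 = 0) (hb0 : b.coeff 0 = 0)
    (had : a.natDegree ≤ m) (hbd : b.natDegree ≤ m)
    (hunit : IsUnit (a.coeff m))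
    (hcomm : ∀ j : ℕ, m < j → j ≤ 2 * m → (a * b - b * a).coeff j = 0) :
    Matrix.trace ((a.coeff m)⁻¹ * (a * b - b * a).coeff m) = 0 := by
  haveI : NeZero n := ⟨by omega⟩
  set R := Matrix (Fin n) (Fin n) K
  haveI : Nontrivial R := by unfold R; infer_instance
  set A : R := a.coeff m with hA
  set B : R := A⁻¹ with hB
  have hdet : IsUnit A.det := (Matrix.isUnit_iff_isUnit_det A).mp hunit
  have hBA : B * A = 1 := Matrix.nonsing_inv_mul A hdet
  have hAB : A * B = 1 := Matrix.mul_nonsing_inv A hdet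
  have hAcan : ∀ x : R, A * x = 0 → x = 0 := by
    intro x hx
    have : B * (A * x) = 0 := by rw [hx, mul_zero]
    rwa [← mul_assoc, hBA, one_mul] at this
  have hAne : A ≠ 0 := by
    intro h
    have : (1 : R) = 0 := by rw [← hBA, h, mul_zero]
    exact one_ne_zero this
  have had' : a.natDegree = m :=
    le_antisymm had (le_natDegree_of_ne_zero hAne)
  have hlca : a.leadingCoeff = A := by rw [Polynomial.leadingCoeff, had']
  set c := a * b - b * a with hc
  have hcd : c.natDegree ≤ 2 * m := by
    rw [hc]
    refine le_trans (natDegree_sub_le _ _) ?_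
    have h1 : (a * b).natDegree ≤ 2 * m :=
      le_trans natDegree_mul_le (by omega)
    have h2 : (b * a).natDegree ≤ 2 * m :=
      le_trans natDegree_mul_le (by omega)
    omega
  have hcz : ∀ j, m < j → c.coeff j = 0 := by
    intro j hj
    by_cases h2 : j ≤ 2 * m
    · exact hcomm j hj h2
    · exact coeff_eq_zero_of_natDegree_lt (by omega)
  -- the monic polynomial p = a * C B
  set p : Polynomial R := a * C B with hp
  have hpm : p.coeff m = 1 := by rw [hp, coeff_mul_C, ← hA, hAB]
  have hpd : p.natDegree = m := by
    have h1 : p.natDegree ≤ m :=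
      le_trans natDegree_mul_le (by simp [had', natDegree_C])
    have h2 : m ≤ p.natDegree := le_natDegree_of_ne_zero (by rw [hpm]; exact one_ne_zero)
    omega
  have hmonic : p.Monic := by
    unfold Polynomial.Monic Polynomial.leadingCoeff
    rw [hpd, hpm]
  set N := 2 * m with hN
  -- division of X^N by p gives a * s = X^N - r
  set r : Polynomial R := (X ^ N) %ₘ p with hr
  set s : Polynomial R := C B * ((X ^ N) /ₘ p) with hs
  have hdiv : a * s = X ^ N - r := by
    have h := modByMonic_add_div (X ^ N : Polynomial R) p
    rw [hs, ← mul_assoc, ← hp, ← hr] at *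
    exact eq_sub_of_add_eq' h
  have natdeg_mod_lt : ∀ u : Polynomial R, (u %ₘ p).natDegree < m := by
    intro u
    by_cases hu : u %ₘ p = 0
    · rw [hu, natDegree_zero]; omega
    · have hd := degree_modByMonic_lt u hmonic
      rw [degree_eq_natDegree hu, degree_eq_natDegree hmonic.ne_zero, hpd] at hd
      exact_mod_cast hd
  have hrd : r.natDegree < m := natdeg_mod_lt _
  -- degree bound for s
  have hsd : s.natDegree ≤ m := by
    by_cases hs0 : s = 0
    · simp [hs0]
    · have hne : (a * s).coeff (m + s.natDegree) ≠ 0 := by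
        have h := coeff_mul_degree_add_degree a s
        rw [had', hlca] at h
        rw [h]
        intro h'
        exact (leadingCoeff_ne_zero.mpr hs0) (hAcan _ h')
      have hle : (a * s).natDegree ≤ N := by
        rw [hdiv]
        refine le_trans (natDegree_sub_le _ _) ?_
        simp only [natDegree_X_pow, max_le_iff]
        omega
      have := le_natDegree_of_ne_zero hne
      omega
  -- s.coeff m = B
  have hsm : s.coeff m = B := by
    have h1 : (a * s).coeff N = 1 := by
      rw [hdiv, coeff_sub, coeff_X_pow, if_pos rfl,
        coeff_eq_zero_of_natDegree_lt (by omega : r.natDegree < N), sub_zero]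
    rw [coeff_mul] at h1
    have h2 : ∑ x ∈ Finset.HasAntidiagonal.antidiagonal N, a.coeff x.1 * s.coeff x.2
        = a.coeff m * s.coeff m := by
      apply Finset.sum_eq_single (m, m)
      · rintro ⟨i, j⟩ hij hne
        rw [Finset.HasAntidiagonal.mem_antidiagonal] at hij
        simp only at hij ⊢
        rcases lt_trichotomy i m with h | h | h
        · rw [coeff_eq_zero_of_natDegree_lt (by omega : s.natDegree < j), mul_zero]
        · exfalso
          apply hne
          have hj : j = m := by omega
          simp [h, hj]
        · rw [coeff_eq_zero_of_natDegree_lt (by omega : a.natDegree < i), zero_mul]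
      · intro h
        exact absurd (Finset.HasAntidiagonal.mem_antidiagonal.mpr (by omega)) h
    rw [h2, ← hA] at h1
    calc s.coeff m = (B * A) * s.coeff m := by rw [hBA, one_mul]
      _ = B * (A * s.coeff m) := by rw [mul_assoc]
      _ = B := by rw [h1, mul_one]
  -- right division: s * a = X ^ N - w
  set r2 : Polynomial R := (r * a) %ₘ p with hr2
  set w : Polynomial R := C B * ((r * a) /ₘ p) with hw
  have hdiv2 : a * w = r * a - r2 := by
    have h := modByMonic_add_div (r * a : Polynomial R) p
    rw [hw, ← mul_assoc, ← hp, ← hr2] at *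
    exact eq_sub_of_add_eq' h
  have hr2d : r2.natDegree < m := natdeg_mod_lt _
  have hwd : w.natDegree < m := by
    by_cases hw0 : w = 0
    · rw [hw0, natDegree_zero]; omega
    · have hne : (a * w).coeff (m + w.natDegree) ≠ 0 := by
        have h := coeff_mul_degree_add_degree a w
        rw [had', hlca] at h
        rw [h]
        intro h'
        exact (leadingCoeff_ne_zero.mpr hw0) (hAcan _ h')
      have hle : (a * w).natDegree ≤ 2 * m - 1 := by
        rw [hdiv2]
        refine le_trans (natDegree_sub_le _ _) ?_
        have : (r * a).natDegree ≤ 2 * m - 1 :=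
          le_trans natDegree_mul_le (by omega)
        simp only [max_le_iff]
        omega
      have := le_natDegree_of_ne_zero hne
      omega
  have hsa : s * a = X ^ N - w := by
    have hz : a * (s * a + w - X ^ N) = -r2 := by
      have h1 : a * (s * a) = (X ^ N - r) * a := by rw [← mul_assoc, hdiv]
      have h2 : (X ^ N : Polynomial R) * a = a * X ^ N := X_pow_mul
      calc a * (s * a + w - X ^ N)
          = a * (s * a) + a * w - a * X ^ N := by rw [mul_sub, mul_add]
        _ = (X ^ N - r) * a + (r * a - r2) - a * X ^ N := by rw [h1, hdiv2]
        _ = X ^ N * a - a * X ^ N - r2 := by rw [sub_mul]; abel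
        _ = -r2 := by rw [h2]; abel
    have hz0 : s * a + w - X ^ N = 0 := by
      by_contra hz0
      have hne : (a * (s * a + w - X ^ N)).coeff (m + (s * a + w - X ^ N).natDegree) ≠ 0 := by
        have h := coeff_mul_degree_add_degree a (s * a + w - X ^ N)
        rw [had', hlca] at h
        rw [h]
        intro h'
        exact (leadingCoeff_ne_zero.mpr hz0) (hAcan _ h')
      rw [hz] at hne
      exact hne (by
        apply coeff_eq_zero_of_natDegree_lt
        rw [natDegree_neg]
        omega)
    have h3 := sub_eq_zero.mp hz0
    exact eq_sub_of_add_eq h3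
  have hsub : s * a - a * s = r - w := by rw [hsa, hdiv]; abel
  -- final computation
  have hfin : (s * c).coeff N = B * c.coeff m := by
    rw [coeff_mul, show B * c.coeff m = s.coeff m * c.coeff m by rw [hsm]]
    apply Finset.sum_eq_single (m, m)
    · rintro ⟨i, j⟩ hij hne
      rw [Finset.HasAntidiagonal.mem_antidiagonal] at hij
      simp only at hij ⊢
      rcases lt_trichotomy i m with h | h | h
      · rw [hcz j (by omega), mul_zero]
      · exfalso
        apply hne
        have hj : j = m := by omega
        simp [h, hj]
      · rw [coeff_eq_zero_of_natDegree_lt (by omega : s.natDegree < i), zero_mul]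
    · intro h
      exact absurd (Finset.HasAntidiagonal.mem_antidiagonal.mpr (by omega)) h
  have htr : Matrix.trace ((s * c).coeff N) = 0 := by
    have e1 : Matrix.trace ((s * (a * b)).coeff N)
        = Matrix.trace (((s * a) * b).coeff N) := by
      calc Matrix.trace ((s * (a * b)).coeff N)
          = Matrix.trace (((a * b) * s).coeff N) := tr_coeff_mul_comm _ _ _
        _ = Matrix.trace ((a * (b * s)).coeff N) := by rw [mul_assoc]
        _ = Matrix.trace (((b * s) * a).coeff N) := tr_coeff_mul_comm _ _ _
        _ = Matrix.trace ((b * (s * a)).coeff N) := by rw [mul_assoc]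
        _ = Matrix.trace (((s * a) * b).coeff N) := (tr_coeff_mul_comm _ _ _).symm
    have e2 : Matrix.trace ((s * (b * a)).coeff N)
        = Matrix.trace (((a * s) * b).coeff N) := by
      calc Matrix.trace ((s * (b * a)).coeff N)
          = Matrix.trace (((b * a) * s).coeff N) := tr_coeff_mul_comm _ _ _
        _ = Matrix.trace ((b * (a * s)).coeff N) := by rw [mul_assoc]
        _ = Matrix.trace (((a * s) * b).coeff N) := (tr_coeff_mul_comm _ _ _).symm
    have e3 : Matrix.trace ((s * c).coeff N)
        = Matrix.trace ((((s * a) - (a * s)) * b).coeff N) := by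
      rw [hc, mul_sub, sub_mul, coeff_sub, coeff_sub, Matrix.trace_sub,
        Matrix.trace_sub, e1, e2]
    rw [e3, hsub]
    have hz : ((r - w) * b).coeff N = 0 := by
      apply coeff_eq_zero_of_natDegree_lt
      have h1 : ((r - w) * b).natDegree ≤ (r - w).natDegree + b.natDegree :=
        natDegree_mul_le
      have h2 := natDegree_sub_le r w
      omega
    rw [hz, Matrix.trace_zero]
  rw [← hfin] at *
  rw [hfin]
  exact htr
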